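/- Let G = (V, E) be a finite graph with V nonempty, ∅ ∉ V, W = V ∪ {∅}, and define the matrix Z on W × W by Z(∅,∅) = α(G), Z(∅,x) = Z(x,∅) = −1/2 for x ∈ V, Z(x,y) = 1/2 if (x,y) ∈ E, and Z(x,y) = 0 otherwise. Then for every f : W → {0,1}, one has ⟨Z, f ⊗ f*⟩ ≥ 0; i.e., Z lies in the dual cone of the Boolean-quadratic cone on W. -/

import Mathlib

open Finset

/-- The independence number of a finite graph. -/
noncomputable def indepNum {V : Type*} (G : SimpleGraph V) : ℕ :=
  sSup {n : ℕ | ∃ s : Finset V, (∀ x ∈ s, ∀ y ∈ s, ¬ G.Adj x y) ∧ s.card = n}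

/-- The matrix `Z` on `W × W`, `W = V ∪ {∅}` (modelled as `Option V`, with `none = ∅`):
`Z(∅,∅) = α(G)`, `Z(∅,x) = Z(x,∅) = −1/2`, `Z(x,y) = 1/2` for edges, `0` otherwise. -/
noncomputable def Zmat {V : Type*} (G : SimpleGraph V) [DecidableRel G.Adj] :
    Matrix (Option V) (Option V) ℝ := fun a b =>
  match a, b with
  | none, none => (indepNum G : ℝ)
  | none, some _ => -(1 / 2)
  | some _, none => -(1 / 2)
  | some x, some y => if G.Adj x y then 1 / 2 else 0

section aux
variable {V : Type*} [Fintype V] (G : SimpleGraph V) [DecidableRel G.Adj]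

/-- Number of ordered adjacent pairs inside `s`. -/
def Ecount (s : Finset V) : ℕ := ∑ x ∈ s, ∑ y ∈ s, if G.Adj x y then 1 else 0

lemma indep_card_le {s : Finset V} (h : ∀ x ∈ s, ∀ y ∈ s, ¬ G.Adj x y) :
    s.card ≤ indepNum G := by
  apply le_csSup
  · refine ⟨Fintype.card V, ?_⟩
    rintro n ⟨t, -, rfl⟩
    exact t.card_le_univ
  · exact ⟨s, h, rfl⟩

lemma key (n : ℕ) : ∀ s : Finset V, Ecount G s = n →
    2 * s.card ≤ 2 * indepNum G + Ecount G s := by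
  classical
  induction n using Nat.strong_induction_on with
  | _ n ih =>
    intro s hs
    by_cases h : ∀ x ∈ s, ∀ y ∈ s, ¬ G.Adj x y
    · have := indep_card_le G h
      omega
    · push_neg at h
      obtain ⟨x, hx, y, hy, hxy⟩ := h
      have hne : y ≠ x := fun he => G.irrefl (he ▸ hxy)
      set s' := s.erase x with hs'
      have hy' : y ∈ s' := Finset.mem_erase.2 ⟨hne, hy⟩
      have hcard : s'.card = s.card - 1 := Finset.card_erase_of_mem hx
      have hsplit : Ecount G s
          = ((if G.Adj x x then 1 else 0) + ∑ b ∈ s', if G.Adj x b then 1 else 0)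
            + ∑ a ∈ s', ((if G.Adj a x then 1 else 0) + ∑ b ∈ s', if G.Adj a b then 1 else 0) := by
        rw [Ecount, ← Finset.add_sum_erase s _ hx]
        congr 1
        · exact (Finset.add_sum_erase s _ hx).symm
        · exact Finset.sum_congr rfl fun a _ => (Finset.add_sum_erase s _ hx).symm
      have h1 : 1 ≤ ∑ b ∈ s', if G.Adj x b then 1 else 0 := by
        have := Finset.single_le_sum (f := fun b => if G.Adj x b then 1 else 0)
          (fun i _ => Nat.zero_le _) hy'
        simpa [hxy] using this
      have h2 : 1 ≤ ∑ a ∈ s', if G.Adj a x then 1 else 0 := by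
        have := Finset.single_le_sum (f := fun a => if G.Adj a x then 1 else 0)
          (fun i _ => Nat.zero_le _) hy'
        simpa [G.adj_symm hxy] using this
      have hE : Ecount G s' + 2 ≤ Ecount G s := by
        rw [hsplit, Finset.sum_add_distrib]
        have : ∑ a ∈ s', ∑ b ∈ s', (if G.Adj a b then 1 else 0) = Ecount G s' := rfl
        omega
      have hlt : Ecount G s' < n := by omega
      have := ih _ hlt s' rfl
      have hc1 : 1 ≤ s.card := Finset.card_pos.2 ⟨x, hx⟩
      omega

end aux

/-- for every Boolean `f : W → {0,1}`, `⟨Z, f ⊗ f*⟩ ≥ 0`;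
i.e. `Z` lies in the dual cone of the Boolean-quadratic cone on `W`. -/
theorem stmt_6 {V : Type*} [Fintype V] (G : SimpleGraph V) [DecidableRel G.Adj]
    (f : Option V → ℝ) (hf : ∀ w, f w = 0 ∨ f w = 1) :
    0 ≤ ∑ x : Option V, ∑ y : Option V, Zmat G x y * (f x * f y) := by
  classical
  set s : Finset V := univ.filter (fun x => f (some x) = 1) with hsdef
  have hg : ∀ x : V, f (some x) = if x ∈ s then 1 else 0 := by
    intro x
    rcases hf (some x) with h | h <;> simp [hsdef, h]
  simp only [Fintype.sum_option, Zmat, hg]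
  have hsum1 : ∑ x : V, (if x ∈ s then (1:ℝ) else 0) = s.card := by
    rw [Finset.sum_ite_mem, Finset.univ_inter, Finset.sum_const]
    simp
  have hdbl : ∑ x : V, ∑ y : V, (if G.Adj x y then (1/2:ℝ) else 0) *
      ((if x ∈ s then (1:ℝ) else 0) * (if y ∈ s then (1:ℝ) else 0))
      = (Ecount G s : ℝ) / 2 := by
    have hterm : ∀ x y : V, (if G.Adj x y then (1/2:ℝ) else 0) *
        ((if x ∈ s then (1:ℝ) else 0) * (if y ∈ s then (1:ℝ) else 0))
        = if x ∈ s then (if y ∈ s then (if G.Adj x y then (1/2:ℝ) else 0) else 0) else 0 := by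
      intro x y; split_ifs <;> ring
    have step : ∑ x : V, ∑ y : V, (if G.Adj x y then (1/2:ℝ) else 0) *
        ((if x ∈ s then (1:ℝ) else 0) * (if y ∈ s then (1:ℝ) else 0))
        = ∑ x ∈ s, ∑ y ∈ s, (if G.Adj x y then (1/2:ℝ) else 0) := by
      have : ∀ x : V, ∑ y : V, (if G.Adj x y then (1/2:ℝ) else 0) *
          ((if x ∈ s then (1:ℝ) else 0) * (if y ∈ s then (1:ℝ) else 0))
          = if x ∈ s then ∑ y : V,
              (if y ∈ s then (if G.Adj x y then (1/2:ℝ) else 0) else 0) else 0 := by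
        intro x
        split_ifs with h
        · exact Finset.sum_congr rfl fun y _ => by split_ifs <;> ring
        · exact Finset.sum_eq_zero fun y _ => by split_ifs <;> ring
      rw [Finset.sum_congr rfl fun x _ => this x, Finset.sum_ite_mem, Finset.univ_inter]
      exact Finset.sum_congr rfl fun x _ => by rw [Finset.sum_ite_mem, Finset.univ_inter]
    rw [step, Ecount, eq_div_iff (by norm_num : (2:ℝ) ≠ 0)]
    push_cast
    rw [Finset.sum_mul]
    refine Finset.sum_congr rfl fun x _ => ?_
    rw [Finset.sum_mul]
    refine Finset.sum_congr rfl fun y _ => ?_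
    split_ifs <;> norm_num
  rcases hf none with h0 | h0 <;> rw [h0]
  · simp only [zero_mul, mul_zero, Finset.sum_const_zero, add_zero, zero_add]
    rw [hdbl]
    positivity
  · have hkey := key G (Ecount G s) s rfl
    have hkey' : (2:ℝ) * s.card ≤ 2 * indepNum G + Ecount G s := by exact_mod_cast hkey
    simp only [one_mul, mul_one]
    have e1 : ∑ x : V, -(1/2:ℝ) * (if x ∈ s then 1 else 0) = -(1/2) * s.card := by
      rw [← Finset.mul_sum, hsum1]
    rw [Finset.sum_add_distrib, e1, hdbl]
    linarith
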